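/- Let g : Δ → ℂ be holomorphic and suppose g is the infinitesimal generator of a one-parameter continuous semigroup of holomorphic self-maps of Δ. If the angular limit ∠lim_{z→1} g(z)/|z − 1|³ = 0, then g ≡ 0 on Δ. -/

import Mathlib

open Filter Metric

/-- `g : ℂ → ℂ` is the infinitesimal generator of a one-parameter continuous
semigroup `{F_t}_{t ≥ 0}` of holomorphic self-maps of the open unit disk
`Δ = ball 0 1`:  `F_{t+s} = F_t ∘ F_s`, `F_t z → z` as `t → 0⁺`, and
`g z = lim_{t→0⁺} (z - F_t z)/t` for every `z ∈ Δ`. -/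
def IsGenOnDisk (g : ℂ → ℂ) : Prop :=
  ∃ F : ℝ → ℂ → ℂ,
    (∀ t : ℝ, 0 ≤ t → DifferentiableOn ℂ (F t) (ball (0 : ℂ) 1) ∧
      Set.MapsTo (F t) (ball (0 : ℂ) 1) (ball (0 : ℂ) 1)) ∧
    (∀ t s : ℝ, 0 ≤ t → 0 ≤ s → ∀ z ∈ ball (0 : ℂ) 1, F (t + s) z = F t (F s z)) ∧
    (∀ z ∈ ball (0 : ℂ) 1,
      Tendsto (fun t : ℝ => F t z) (nhdsWithin 0 (Set.Ioi 0)) (nhds z)) ∧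
    (∀ z ∈ ball (0 : ℂ) 1,
      Tendsto (fun t : ℝ => (z - F t z) / (t : ℂ)) (nhdsWithin 0 (Set.Ioi 0)) (nhds (g z)))

/-- The nontangential approach region `Γ_k(τ) = {z ∈ Δ : |z - τ| / (1 - |z|) < k}`. -/
def nontangentialRegion (k : ℝ) (τ : ℂ) : Set ℂ :=
  {z : ℂ | ‖z‖ < 1 ∧ ‖z - τ‖ < k * (1 - ‖z‖)}

/-- `g` has angular limit `L` at the boundary point `τ`. -/
def AngularLimit (g : ℂ → ℂ) (τ L : ℂ) : Prop :=
  ∀ k : ℝ, 1 < k →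
    Tendsto g (nhdsWithin τ (nontangentialRegion k τ)) (nhds L)

noncomputable def mob (a ζ : ℂ) : ℂ := (a - ζ) / (1 - (starRingEnd ℂ) a * ζ)

lemma normSq_mobius_ineq {a ζ : ℂ} (ha : ‖a‖ < 1) (hζ : ‖ζ‖ < 1) :
    ‖a - ζ‖ < ‖1 - (starRingEnd ℂ) a * ζ‖ := by
  have key : Complex.normSq (1 - (starRingEnd ℂ) a * ζ) - Complex.normSq (a - ζ)
      = (1 - Complex.normSq a) * (1 - Complex.normSq ζ) := by
    have : ((Complex.normSq (1 - (starRingEnd ℂ) a * ζ) : ℂ)) - (Complex.normSq (a - ζ) : ℂ)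
        = (1 - (Complex.normSq a : ℂ)) * (1 - (Complex.normSq ζ : ℂ)) := by
      rw [← Complex.mul_conj, ← Complex.mul_conj, ← Complex.mul_conj, ← Complex.mul_conj]
      simp only [map_sub, map_mul, map_one, Complex.conj_conj]
      ring
    exact_mod_cast this
  have ha2 : Complex.normSq a < 1 := by
    rw [← Complex.sq_norm]; nlinarith [norm_nonneg a]
  have hζ2 : Complex.normSq ζ < 1 := by
    rw [← Complex.sq_norm]; nlinarith [norm_nonneg ζ]
  have : Complex.normSq (a - ζ) < Complex.normSq (1 - (starRingEnd ℂ) a * ζ) := by nlinarith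
  rw [← Complex.sq_norm, ← Complex.sq_norm] at this
  exact lt_of_pow_lt_pow_left₀ 2 (norm_nonneg _) this

lemma mob_den_ne {a ζ : ℂ} (ha : ‖a‖ < 1) (hζ : ‖ζ‖ < 1) :
    1 - (starRingEnd ℂ) a * ζ ≠ 0 := by
  intro h
  have h2 : ‖(starRingEnd ℂ) a * ζ‖ < 1 := by
    rw [norm_mul, Complex.norm_conj]; nlinarith [norm_nonneg a, norm_nonneg ζ]
  rw [sub_eq_zero] at h
  rw [← h] at h2; simp at h2

lemma memb {z : ℂ} (h : z ∈ ball (0:ℂ) 1) : ‖z‖ < 1 := by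
  rwa [mem_ball_zero_iff] at h

lemma memb' {z : ℂ} (h : ‖z‖ < 1) : z ∈ ball (0:ℂ) 1 := by
  rwa [mem_ball_zero_iff]

lemma mob_mem {a ζ : ℂ} (ha : ‖a‖ < 1) (hζ : ‖ζ‖ < 1) :
    ‖mob a ζ‖ < 1 := by
  rw [mob, norm_div, div_lt_one]
  · exact normSq_mobius_ineq ha hζ
  · exact (norm_pos_iff).2 (mob_den_ne ha hζ)

lemma mob_self (a : ℂ) : mob a a = 0 := by simp [mob]

lemma mob_zero (a : ℂ) : mob a 0 = a := by simp [mob]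

lemma mob_invol {a ζ : ℂ} (ha : ‖a‖ < 1) (hζ : ‖ζ‖ < 1) :
    mob a (mob a ζ) = ζ := by
  have h1 := mob_den_ne ha hζ
  have h4 : 1 - (starRingEnd ℂ) a * mob a ζ ≠ 0 := mob_den_ne ha (mob_mem ha hζ)
  have e : mob a (mob a ζ) = (a - mob a ζ) / (1 - (starRingEnd ℂ) a * mob a ζ) := rfl
  rw [e, div_eq_iff h4, mob]
  have h1' : 1 - ζ * (starRingEnd ℂ) a ≠ 0 := by rwa [mul_comm]
  field_simp
  ring

lemma mob_diff {a : ℂ} (ha : ‖a‖ < 1) :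
    DifferentiableOn ℂ (mob a) (ball (0:ℂ) 1) := by
  intro ζ hζ
  rw [mem_ball_zero_iff] at hζ
  apply DifferentiableWithinAt.div
  · exact (differentiable_const a).differentiableAt.sub differentiableAt_id |>.differentiableWithinAt
  · exact ((differentiable_const (1:ℂ)).differentiableAt.sub
      ((differentiable_const _).differentiableAt.mul differentiableAt_id)).differentiableWithinAt
  · exact mob_den_ne ha hζ

/-- Schwarz–Pick inequality. -/
lemma schwarz_pick {F : ℂ → ℂ} (hd : DifferentiableOn ℂ F (ball 0 1))
    (hm : Set.MapsTo F (ball (0:ℂ) 1) (ball (0:ℂ) 1)) {z w : ℂ}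
    (hz : z ∈ ball (0:ℂ) 1) (hw : w ∈ ball (0:ℂ) 1) :
    ‖F z - F w‖ * ‖1 - (starRingEnd ℂ) w * z‖
      ≤ ‖z - w‖ * ‖1 - (starRingEnd ℂ) (F w) * F z‖ := by
  have hFw : ‖F w‖ < 1 := memb (hm hw)
  have hFz : ‖F z‖ < 1 := memb (hm hz)
  replace hz := memb hz
  replace hw := memb hw
  -- h := mob (F w) ∘ F ∘ mob w
  set h : ℂ → ℂ := fun ζ => mob (F w) (F (mob w ζ)) with hh
  have hmaps : Set.MapsTo h (ball (0:ℂ) 1) (ball (0:ℂ) 1) := by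
    intro ζ hζ
    exact memb' (mob_mem hFw (memb (hm (memb' (mob_mem hw (memb hζ))))))
  have hdiff : DifferentiableOn ℂ h (ball (0:ℂ) 1) := by
    apply DifferentiableOn.comp (mob_diff hFw)
      (DifferentiableOn.comp hd (mob_diff hw)
        (fun ζ hζ => memb' (mob_mem hw (memb hζ))))
      (fun ζ hζ => hm (memb' (mob_mem hw (memb hζ))))
  have h0 : h 0 = 0 := by
    rw [hh]; simp only [mob_zero]; exact mob_self (F w)
  have key := Complex.norm_le_norm_of_mapsTo_ball hdiff (hmaps.mono_right ball_subset_closedBall) h0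
    (z := mob w z) (mob_mem hw hz)
  rw [hh] at key
  simp only [mob_invol hw hz] at key
  -- key : abs (mob (F w) (F z)) ≤ abs (mob w z)
  rw [mob, mob, norm_div, norm_div, div_le_div_iff₀
    ((norm_pos_iff).2 (mob_den_ne hFw hFz)) ((norm_pos_iff).2 (mob_den_ne hw hz))] at key
  calc ‖F z - F w‖ * ‖1 - (starRingEnd ℂ) w * z‖
      = ‖F w - F z‖ * ‖1 - (starRingEnd ℂ) w * z‖ := by
        rw [← norm_neg (F w - F z)]; ring_nf
    _ ≤ ‖w - z‖ * ‖1 - (starRingEnd ℂ) (F w) * F z‖ := key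
    _ = ‖z - w‖ * ‖1 - (starRingEnd ℂ) (F w) * F z‖ := by
        rw [← norm_neg (w - z)]; ring_nf

lemma gen_ineq {g : ℂ → ℂ} (hgen : IsGenOnDisk g) {z w : ℂ}
    (hz : z ∈ ball (0:ℂ) 1) (hw : w ∈ ball (0:ℂ) 1) :
    0 ≤ ((z - w) * (starRingEnd ℂ) (g z - g w)).re
          * Complex.normSq (1 - (starRingEnd ℂ) w * z)
        + Complex.normSq (z - w)
          * ((1 - (starRingEnd ℂ) w * z)
             * (starRingEnd ℂ) ((starRingEnd ℂ) w * g z + (starRingEnd ℂ) (g w) * z)).re := by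
  obtain ⟨F, hF, -, -, hder⟩ := hgen
  set l := nhdsWithin (0:ℝ) (Set.Ioi 0) with hldef
  set a : ℝ → ℂ := fun t => (z - F t z) / (t:ℂ) with hadef
  set b : ℝ → ℂ := fun t => (w - F t w) / (t:ℂ) with hbdef
  have ha : Tendsto a l (nhds (g z)) := hder z hz
  have hb : Tendsto b l (nhds (g w)) := hder w hw
  set d0 : ℂ := 1 - (starRingEnd ℂ) w * z with hd0
  set X : ℂ := z - w with hX
  set e : ℝ → ℂ := fun t =>
    (starRingEnd ℂ) w * a t + (starRingEnd ℂ) (b t) * z - (t:ℂ) * ((starRingEnd ℂ) (b t) * a t)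
    with hedef
  -- the eventual inequality
  have hev : ∀ᶠ t in l,
      (-2 * (X * (starRingEnd ℂ) (a t - b t)).re + t * Complex.normSq (a t - b t))
          * Complex.normSq d0
        ≤ Complex.normSq X * (2 * (d0 * (starRingEnd ℂ) (e t)).re + t * Complex.normSq (e t)) := by
    filter_upwards [self_mem_nhdsWithin] with t ht
    rw [Set.mem_Ioi] at ht
    have htC : (t:ℂ) ≠ 0 := by exact_mod_cast ht.ne'
    have hFz : F t z = z - (t:ℂ) * a t := by
      rw [hadef]; field_simp; ring
    have hFw : F t w = w - (t:ℂ) * b t := by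
      rw [hbdef]; field_simp; ring
    have hsp := schwarz_pick (hF t ht.le).1 (hF t ht.le).2 hz hw
    -- square it
    have hsq : Complex.normSq (F t z - F t w) * Complex.normSq d0
        ≤ Complex.normSq X * Complex.normSq (1 - (starRingEnd ℂ) (F t w) * F t z) := by
      rw [← Complex.sq_norm, ← Complex.sq_norm, ← Complex.sq_norm, ← Complex.sq_norm]
      have h2 := mul_self_le_mul_self
        (mul_nonneg (norm_nonneg (F t z - F t w)) (norm_nonneg d0)) hsp
      nlinarith [h2]
    have id1 : F t z - F t w = X - (t:ℂ) * (a t - b t) := by rw [hFz, hFw, hX]; ring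
    have id2 : 1 - (starRingEnd ℂ) (F t w) * F t z = d0 + (t:ℂ) * e t := by
      rw [hFz, hFw, hedef, hd0]
      simp only [map_sub, map_mul, Complex.conj_ofReal]
      ring
    have n1 : Complex.normSq (F t z - F t w)
        = Complex.normSq X + t * (-2 * (X * (starRingEnd ℂ) (a t - b t)).re
            + t * Complex.normSq (a t - b t)) := by
      rw [id1, Complex.normSq_sub]
      have : (X * (starRingEnd ℂ) ((t:ℂ) * (a t - b t))).re
          = t * (X * (starRingEnd ℂ) (a t - b t)).re := by
        rw [map_mul, Complex.conj_ofReal, show X * ((t:ℂ) * (starRingEnd ℂ) (a t - b t))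
          = (t:ℂ) * (X * (starRingEnd ℂ) (a t - b t)) by ring, Complex.re_ofReal_mul]
      rw [this, Complex.normSq_mul, Complex.normSq_ofReal]
      ring
    have n2 : Complex.normSq (1 - (starRingEnd ℂ) (F t w) * F t z)
        = Complex.normSq d0 + t * (2 * (d0 * (starRingEnd ℂ) (e t)).re
            + t * Complex.normSq (e t)) := by
      rw [id2, Complex.normSq_add]
      have : (d0 * (starRingEnd ℂ) ((t:ℂ) * e t)).re = t * (d0 * (starRingEnd ℂ) (e t)).re := by
        rw [map_mul, Complex.conj_ofReal, show d0 * ((t:ℂ) * (starRingEnd ℂ) (e t))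
          = (t:ℂ) * (d0 * (starRingEnd ℂ) (e t)) by ring, Complex.re_ofReal_mul]
      rw [this, Complex.normSq_mul, Complex.normSq_ofReal]
      ring
    rw [n1, n2] at hsq
    have := mul_le_mul_of_nonneg_left (le_refl (1:ℝ)) ht.le  -- dummy
    nlinarith [hsq, ht]
  -- limits
  have hteny : Tendsto (fun t : ℝ => t) l (nhds 0) :=
    tendsto_id.mono_left nhdsWithin_le_nhds
  have hab : Tendsto (fun t => a t - b t) l (nhds (g z - g w)) := ha.sub hb
  have hL : Tendsto (fun t =>
      (-2 * (X * (starRingEnd ℂ) (a t - b t)).re + t * Complex.normSq (a t - b t))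
        * Complex.normSq d0) l
      (nhds ((-2 * (X * (starRingEnd ℂ) (g z - g w)).re + 0) * Complex.normSq d0)) := by
    apply Tendsto.mul_const
    apply Tendsto.add
    · exact (tendsto_const_nhds.mul (Complex.continuous_re.tendsto _ |>.comp
        (tendsto_const_nhds.mul ((Complex.continuous_conj.tendsto _).comp hab))))
    · simpa using hteny.mul ((Complex.continuous_normSq.tendsto _).comp hab)
  have he : Tendsto e l (nhds ((starRingEnd ℂ) w * g z + (starRingEnd ℂ) (g w) * z)) := by
    have : Tendsto (fun t => (starRingEnd ℂ) w * a t + (starRingEnd ℂ) (b t) * z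
        - (t:ℂ) * ((starRingEnd ℂ) (b t) * a t)) l
        (nhds ((starRingEnd ℂ) w * g z + (starRingEnd ℂ) (g w) * z
          - 0 * ((starRingEnd ℂ) (g w) * g z))) := by
      apply Tendsto.sub
      · exact (tendsto_const_nhds.mul ha).add
          (((Complex.continuous_conj.tendsto _).comp hb).mul tendsto_const_nhds)
      · exact ((Complex.continuous_ofReal.tendsto _).comp hteny).mul
          (((Complex.continuous_conj.tendsto _).comp hb).mul ha)
    simpa using this
  have hR : Tendsto (fun t =>
      Complex.normSq X * (2 * (d0 * (starRingEnd ℂ) (e t)).re + t * Complex.normSq (e t))) l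
      (nhds (Complex.normSq X * (2 * (d0 * (starRingEnd ℂ)
        ((starRingEnd ℂ) w * g z + (starRingEnd ℂ) (g w) * z)).re + 0))) := by
    apply Tendsto.const_mul
    apply Tendsto.add
    · exact tendsto_const_nhds.mul (Complex.continuous_re.tendsto _ |>.comp
        (tendsto_const_nhds.mul ((Complex.continuous_conj.tendsto _).comp he)))
    · simpa using hteny.mul ((Complex.continuous_normSq.tendsto _).comp he)
  have key := le_of_tendsto_of_tendsto hL hR hev
  simp only [add_zero] at key
  have hre : ((1 - (starRingEnd ℂ) w * z)
      * (starRingEnd ℂ) ((starRingEnd ℂ) w * g z + (starRingEnd ℂ) (g w) * z)).re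
      = (d0 * (starRingEnd ℂ) ((starRingEnd ℂ) w * g z + (starRingEnd ℂ) (g w) * z)).re := rfl
  rw [hre]
  nlinarith [key]

lemma oneBall_closure : (1:ℝ) ∈ closure (Set.Ioo (0:ℝ) 1) := by
  rw [closure_Ioo (by norm_num : (0:ℝ) ≠ 1)]
  exact Set.right_mem_Icc.2 (by norm_num)

lemma m_neBot : (nhdsWithin (1:ℝ) (Set.Ioo 0 1)).NeBot :=
  mem_closure_iff_nhdsWithin_neBot.mp oneBall_closure

lemma radial_of_angular {g : ℂ → ℂ}
    (hlim : AngularLimit (fun z : ℂ => g z / ((‖z - 1‖ ^ 3 : ℝ) : ℂ)) 1 0) :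
    Tendsto (fun r : ℝ => g r / (((1 - r) ^ 3 : ℝ) : ℂ))
      (nhdsWithin 1 (Set.Ioo 0 1)) (nhds 0) := by
  have h2 := hlim 2 one_lt_two
  have hι : Tendsto (fun r : ℝ => (r:ℂ)) (nhdsWithin 1 (Set.Ioo 0 1))
      (nhdsWithin 1 (nontangentialRegion 2 1)) := by
    apply tendsto_nhdsWithin_of_tendsto_nhds_of_eventually_within
    · exact (Complex.continuous_ofReal.tendsto 1).comp
        (tendsto_id.mono_left nhdsWithin_le_nhds)
    · filter_upwards [self_mem_nhdsWithin] with r hr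
      obtain ⟨hr0, hr1⟩ := hr
      constructor
      · rwa [Complex.norm_real, Real.norm_eq_abs, abs_of_pos hr0]
      · rw [show (r:ℂ) - 1 = ((r - 1 : ℝ):ℂ) by push_cast; ring, Complex.norm_real, Real.norm_eq_abs,
          Complex.norm_real, Real.norm_eq_abs, abs_of_neg (by linarith), abs_of_pos hr0]
        linarith
  have hcomp := h2.comp hι
  have : (fun r : ℝ => g r / (((1 - r) ^ 3 : ℝ) : ℂ))
      =ᶠ[nhdsWithin 1 (Set.Ioo 0 1)]
      (fun z : ℂ => g z / ((‖z - 1‖ ^ 3 : ℝ) : ℂ)) ∘ (fun r : ℝ => (r:ℂ)) := by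
    filter_upwards [self_mem_nhdsWithin] with r hr
    obtain ⟨hr0, hr1⟩ := hr
    simp only [Function.comp_apply]
    rw [show (r:ℂ) - 1 = ((r - 1 : ℝ):ℂ) by push_cast; ring, Complex.norm_real, Real.norm_eq_abs,
      abs_of_neg (by linarith)]
    ring_nf
  exact Tendsto.congr' this.symm hcomp

lemma hr1C : Tendsto (fun r : ℝ => (r:ℂ)) (nhdsWithin 1 (Set.Ioo 0 1)) (nhds 1) :=
  (Complex.continuous_ofReal.tendsto 1).comp (tendsto_id.mono_left nhdsWithin_le_nhds)
lemma rho_nonneg (g : ℂ → ℂ)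
    (hineq : ∀ z w : ℂ, z ∈ ball (0:ℂ) 1 → w ∈ ball (0:ℂ) 1 →
      0 ≤ ((z - w) * (starRingEnd ℂ) (g z - g w)).re
          * Complex.normSq (1 - (starRingEnd ℂ) w * z)
        + Complex.normSq (z - w)
          * ((1 - (starRingEnd ℂ) w * z)
             * (starRingEnd ℂ) ((starRingEnd ℂ) w * g z + (starRingEnd ℂ) (g w) * z)).re)
    (hrad : Tendsto (fun r : ℝ => g r / (((1 - r) ^ 3 : ℝ) : ℂ))
      (nhdsWithin 1 (Set.Ioo 0 1)) (nhds 0))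
    {z : ℂ} (hz : z ∈ ball (0:ℂ) 1) :
    0 ≤ ((z - 1) * (starRingEnd ℂ) (g z) * (1 - z)).re := by
  haveI := m_neBot
  set m := nhdsWithin (1:ℝ) (Set.Ioo 0 1) with hm
  set G : ℝ → ℂ := fun r => g r / (((1 - r : ℝ)) : ℂ) with hGdef
  have hG : Tendsto G m (nhds 0) := by
    have heq : G =ᶠ[m] fun r => (g r / (((1 - r) ^ 3 : ℝ) : ℂ)) * (((1 - r) ^ 2 : ℝ) : ℂ) := by
      filter_upwards [self_mem_nhdsWithin] with r hr
      have hne : ((1 - r : ℝ) : ℂ) ≠ 0 := by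
        exact_mod_cast (by linarith [hr.2] : (1 - r : ℝ) ≠ 0)
      have ha : ((1:ℂ) - (r:ℂ)) ≠ 0 := by
        intro h
        have : (r:ℂ) = 1 := by linear_combination -h
        have : r = 1 := by exact_mod_cast this
        linarith [hr.2]
      rw [hGdef]
      push_cast
      rw [div_mul_eq_mul_div, div_eq_div_iff ha (pow_ne_zero 3 ha)]
      ring
    have h2 : Tendsto (fun r : ℝ => (((1 - r) ^ 2 : ℝ) : ℂ)) m (nhds 0) := by
      have h3 : Tendsto (fun r : ℝ => ((1:ℂ) - (r:ℂ)) ^ 2) m (nhds (((1:ℂ) - 1) ^ 2)) :=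
        (tendsto_const_nhds.sub hr1C).pow 2
      norm_num at h3
      convert h3 using 2 with r
      push_cast; ring
    apply Tendsto.congr' heq.symm
    simpa using hrad.mul h2
  set ρ : ℝ → ℝ := fun r => ((z - (r:ℂ)) * (starRingEnd ℂ) (g z) * (1 - (r:ℂ) * z)).re with hρ
  set Et : ℝ → ℝ := fun r =>
    -((z - (r:ℂ)) * (starRingEnd ℂ) (G r)).re * Complex.normSq (1 - (r:ℂ) * z)
      + Complex.normSq (z - (r:ℂ))
        * ((1 - (r:ℂ) * z) * (G r * (starRingEnd ℂ) z)).re with hEt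
  have hev : ∀ᶠ r in m, 0 ≤ (1 + r) * ρ r + Et r := by
    filter_upwards [self_mem_nhdsWithin] with r hr
    obtain ⟨hr0, hr1⟩ := hr
    have hR : ((r:ℂ)) ∈ ball (0:ℂ) 1 := by
      rw [mem_ball_zero_iff, Complex.norm_real, Real.norm_eq_abs, abs_of_pos hr0]
      exact hr1
    have hΦ := hineq _ _ hz hR
    rw [Complex.conj_ofReal] at hΦ
    have hne : ((1:ℂ) - (r:ℂ)) ≠ 0 := by
      intro h
      have h1 : (r:ℂ) = 1 := by linear_combination -h
      have : r = 1 := by exact_mod_cast h1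
      linarith
    have hgR : g r = ((1 - r : ℝ) : ℂ) * G r := by
      rw [hGdef]
      push_cast
      rw [mul_comm]
      exact (div_mul_cancel₀ _ hne).symm
    -- rewrite Φ as (1-r) * ((1+r) * ρ r + Et r)
    have key : ((z - (r:ℂ)) * (starRingEnd ℂ) (g z - g r)).re
          * Complex.normSq (1 - (r:ℂ) * z)
        + Complex.normSq (z - (r:ℂ))
          * ((1 - (r:ℂ) * z)
             * (starRingEnd ℂ) ((r:ℂ) * g z + (starRingEnd ℂ) (g r) * z)).re
        = (1 - r) * ((1 + r) * ρ r + Et r) := by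
      have c1 : (starRingEnd ℂ) (g z - g r)
          = (starRingEnd ℂ) (g z) - ((1 - r : ℝ) : ℂ) * (starRingEnd ℂ) (G r) := by
        rw [map_sub, hgR, map_mul, Complex.conj_ofReal]
      have c2 : (starRingEnd ℂ) ((r:ℂ) * g z + (starRingEnd ℂ) (g r) * z)
          = (r:ℂ) * (starRingEnd ℂ) (g z)
            + ((1 - r : ℝ) : ℂ) * (G r * (starRingEnd ℂ) z) := by
        rw [map_add, map_mul, map_mul, Complex.conj_ofReal, Complex.conj_conj, hgR]
        ring
      rw [c1, c2]
      -- expand the re's of sums/products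
      have n1 : (Complex.normSq (1 - (r:ℂ) * z) : ℂ)
          = (1 - (r:ℂ) * z) * (1 - (r:ℂ) * (starRingEnd ℂ) z) := by
        rw [← Complex.mul_conj]; simp [map_sub, map_mul, Complex.conj_ofReal]
      have n2 : (Complex.normSq (z - (r:ℂ)) : ℂ)
          = (z - (r:ℂ)) * ((starRingEnd ℂ) z - (r:ℂ)) := by
        rw [← Complex.mul_conj]; simp [map_sub, Complex.conj_ofReal]
      -- move everything into a single complex expression and use linearity of re
      rw [show ((z - (r:ℂ)) * ((starRingEnd ℂ) (g z)
            - ((1 - r : ℝ) : ℂ) * (starRingEnd ℂ) (G r))).re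
          * Complex.normSq (1 - (r:ℂ) * z)
          = (((Complex.normSq (1 - (r:ℂ) * z) : ℝ) : ℂ) * ((z - (r:ℂ))
              * ((starRingEnd ℂ) (g z)
                - ((1 - r : ℝ) : ℂ) * (starRingEnd ℂ) (G r)))).re from by
        rw [Complex.re_ofReal_mul]; try ring]
      rw [show Complex.normSq (z - (r:ℂ))
          * ((1 - (r:ℂ) * z) * ((r:ℂ) * (starRingEnd ℂ) (g z)
              + ((1 - r : ℝ) : ℂ) * (G r * (starRingEnd ℂ) z))).re
          = (((Complex.normSq (z - (r:ℂ)) : ℝ) : ℂ) * ((1 - (r:ℂ) * z)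
              * ((r:ℂ) * (starRingEnd ℂ) (g z)
                + ((1 - r : ℝ) : ℂ) * (G r * (starRingEnd ℂ) z)))).re from by
        rw [Complex.re_ofReal_mul]; try ring]
      rw [← Complex.add_re, n1, n2]
      -- now identify with (1-r) * ((1+r) * ρ r + Et r) similarly expressed
      have rhs : (1 - r) * ((1 + r) * ρ r + Et r)
          = ((((1 - r : ℝ)) : ℂ) * ((((1 + r : ℝ)) : ℂ)
              * ((z - (r:ℂ)) * (starRingEnd ℂ) (g z) * (1 - (r:ℂ) * z))
            + (-(((Complex.normSq (1 - (r:ℂ) * z) : ℝ) : ℂ)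
                  * ((z - (r:ℂ)) * (starRingEnd ℂ) (G r)))
              + ((Complex.normSq (z - (r:ℂ)) : ℝ) : ℂ)
                  * ((1 - (r:ℂ) * z) * (G r * (starRingEnd ℂ) z))))).re := by
        rw [Complex.re_ofReal_mul, Complex.add_re, Complex.re_ofReal_mul, Complex.add_re,
          Complex.neg_re, Complex.re_ofReal_mul, Complex.re_ofReal_mul]
        rw [hρ, hEt]
        ring
      rw [rhs, n1, n2]
      congr 1
      push_cast
      ring
    rw [key] at hΦ
    nlinarith [hΦ]
  -- limits
  have hρlim : Tendsto (fun r => (1 + r) * ρ r + Et r) m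
      (nhds ((1 + 1) * ((z - 1) * (starRingEnd ℂ) (g z) * (1 - 1 * z)).re
        + (-((z - 1) * (starRingEnd ℂ) (0:ℂ)).re * Complex.normSq (1 - 1 * z)
            + Complex.normSq (z - 1) * ((1 - 1 * z) * ((0:ℂ) * (starRingEnd ℂ) z)).re))) := by
    apply Tendsto.add
    · apply Tendsto.mul
      · exact tendsto_const_nhds.add (tendsto_id.mono_left nhdsWithin_le_nhds)
      · exact (Complex.continuous_re.tendsto _).comp
          (((tendsto_const_nhds.sub hr1C).mul tendsto_const_nhds).mul
            (tendsto_const_nhds.sub (hr1C.mul tendsto_const_nhds)))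
    · apply Tendsto.add
      · apply Tendsto.mul
        · exact Tendsto.neg ((Complex.continuous_re.tendsto _).comp
            ((tendsto_const_nhds.sub hr1C).mul
              ((Complex.continuous_conj.tendsto _).comp hG)))
        · exact (Complex.continuous_normSq.tendsto _).comp
            (tendsto_const_nhds.sub (hr1C.mul tendsto_const_nhds))
      · apply Tendsto.mul
        · exact (Complex.continuous_normSq.tendsto _).comp
            (tendsto_const_nhds.sub hr1C)
        · exact (Complex.continuous_re.tendsto _).comp
            ((tendsto_const_nhds.sub (hr1C.mul tendsto_const_nhds)).mul
              (hG.mul tendsto_const_nhds))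
  have := ge_of_tendsto hρlim hev
  simp only [map_zero, mul_zero, zero_mul, Complex.zero_re, neg_zero, one_mul] at this
  linarith [this]

lemma q_zero (q : ℂ → ℂ) (hd : DifferentiableOn ℂ q (ball (0:ℂ) 1))
    (hre : ∀ z ∈ ball (0:ℂ) 1, 0 ≤ (q z).re)
    (hrad : Tendsto (fun r : ℝ => q r / (((1 - r : ℝ)) : ℂ))
      (nhdsWithin 1 (Set.Ioo 0 1)) (nhds 0)) :
    ∀ z ∈ ball (0:ℂ) 1, q z = 0 := by
  haveI := m_neBot
  set m := nhdsWithin (1:ℝ) (Set.Ioo 0 1) with hm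
  have hball : ∀ᶠ r : ℝ in m, ((r:ℂ)) ∈ ball (0:ℂ) 1 := by
    filter_upwards [self_mem_nhdsWithin] with r hr
    apply memb'
    rw [Complex.norm_real, Real.norm_eq_abs, abs_of_pos hr.1]
    exact hr.2
  have hsC : Tendsto (fun r : ℝ => (((1 - r : ℝ)) : ℂ)) m (nhds 0) := by
    have : Tendsto (fun r : ℝ => (1:ℂ) - (r:ℂ)) m (nhds (1 - 1)) :=
      tendsto_const_nhds.sub hr1C
    norm_num at this
    convert this using 2 with r
    push_cast; ring
  have hq0 : Tendsto (fun r : ℝ => q r) m (nhds 0) := by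
    have heq : (fun r : ℝ => q r) =ᶠ[m]
        fun r => (q r / (((1 - r : ℝ)) : ℂ)) * (((1 - r : ℝ)) : ℂ) := by
      filter_upwards [self_mem_nhdsWithin] with r hr
      have hne : (((1 - r : ℝ)) : ℂ) ≠ 0 := by
        exact_mod_cast (by linarith [hr.2] : (1 - r : ℝ) ≠ 0)
      rw [div_mul_cancel₀ _ hne]
    apply Tendsto.congr' heq.symm
    simpa using hrad.mul hsC
  set ψ : ℂ → ℂ := fun ζ => (q ζ - 1) / (q ζ + 1) with hψ
  have hden : ∀ z ∈ ball (0:ℂ) 1, q z + 1 ≠ 0 := by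
    intro z hz h
    have : (q z + 1).re = 0 := by rw [h]; simp
    rw [Complex.add_re, Complex.one_re] at this
    linarith [hre z hz]
  have hψle : ∀ z ∈ ball (0:ℂ) 1, ‖ψ z‖ ≤ 1 := by
    intro z hz
    rw [hψ]
    simp only
    rw [norm_div, div_le_one ((norm_pos_iff.2 (hden z hz)))]
    have h1 : Complex.normSq (q z - 1) ≤ Complex.normSq (q z + 1) := by
      rw [show q z - 1 = q z - (1:ℂ) by ring, Complex.normSq_sub, Complex.normSq_add]
      simp only [map_one, mul_one, Complex.normSq_one]
      have := hre z hz
      nlinarith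
    rw [← Complex.sq_norm, ← Complex.sq_norm] at h1
    exact le_of_pow_le_pow_left₀ two_ne_zero (norm_nonneg _) h1
  have hψdiff : DifferentiableOn ℂ ψ (ball (0:ℂ) 1) :=
    (hd.sub (differentiableOn_const 1)).div (hd.add (differentiableOn_const 1)) hden
  by_cases hA : ∃ ζ₀ ∈ ball (0:ℂ) 1, 1 ≤ ‖ψ ζ₀‖
  · obtain ⟨ζ₀, hζ₀, hge⟩ := hA
    have hmax : IsMaxOn (norm ∘ ψ) (ball (0:ℂ) 1) ζ₀ := by
      intro x hx
      simp only [Function.comp_apply]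
      exact le_trans (hψle x hx) hge
    have heq := Complex.eqOn_of_isPreconnected_of_isMaxOn_norm
      (convex_ball (0:ℂ) 1).isPreconnected isOpen_ball hψdiff hζ₀ hmax
    set k := ψ ζ₀ with hk
    have hkne : k ≠ 1 := by
      intro h
      have hv : q ζ₀ - 1 = k * (q ζ₀ + 1) := by
        rw [hk, hψ]
        simp only
        rw [div_mul_cancel₀ _ (hden ζ₀ hζ₀)]
      rw [h, one_mul] at hv
      have h2 : (1:ℂ) = -1 := by linear_combination -hv
      norm_num at h2
    have hqconst : ∀ z ∈ ball (0:ℂ) 1, q z = (1 + k) / (1 - k) := by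
      intro z hz
      have h1 : (q z - 1) / (q z + 1) = k := heq hz
      rw [div_eq_iff (hden z hz)] at h1
      rw [eq_div_iff (sub_ne_zero.2 (Ne.symm hkne))]
      linear_combination h1
    have hconst0 : (1 + k) / (1 - k) = 0 := by
      have h1 : Tendsto (fun _ : ℝ => (1 + k) / (1 - k)) m (nhds ((1 + k) / (1 - k))) :=
        tendsto_const_nhds
      have h2 : (fun r : ℝ => q r) =ᶠ[m] fun _ => (1 + k) / (1 - k) := by
        filter_upwards [hball] with r hr
        exact hqconst _ hr
      exact (tendsto_nhds_unique (hq0.congr' h2) h1).symm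
    intro z hz
    rw [hqconst z hz, hconst0]
  · push_neg at hA
    exfalso
    have hmaps : Set.MapsTo ψ (ball (0:ℂ) 1) (ball (0:ℂ) 1) := fun x hx => memb' (hA x hx)
    set b := ψ 0 with hb
    have hb1 : ‖b‖ < 1 := hA 0 (by simp)
    have hBne : (1:ℂ) + b ≠ 0 := by
      intro h
      have : b = -1 := by linear_combination h
      rw [this] at hb1; simp at this hb1
    set dd : ℝ → ℂ := fun r => (ψ r + 1) / (((1 - r : ℝ)) : ℂ) with hdd
    have hddlim : Tendsto dd m (nhds 0) := by
      have heq : dd =ᶠ[m] fun r => 2 * (q r / (((1 - r : ℝ)) : ℂ)) * (q r + 1)⁻¹ := by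
        filter_upwards [hball, self_mem_nhdsWithin] with r hrb hr
        have hne : (((1 - r : ℝ)) : ℂ) ≠ 0 := by
          exact_mod_cast (by linarith [hr.2] : (1 - r : ℝ) ≠ 0)
        rw [hdd]
        simp only
        rw [hψ]
        simp only
        rw [div_add' _ _ _ (hden _ hrb)]
        field_simp
        ring
      apply Tendsto.congr' heq.symm
      have h1 : Tendsto (fun r : ℝ => (q r + 1)⁻¹) m (nhds (0 + 1)⁻¹) :=
        (hq0.add tendsto_const_nhds).inv₀ (by norm_num)
      have := ((tendsto_const_nhds (x := (2:ℂ))).mul hrad).mul h1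
      simpa using this
    -- Schwarz–Pick at (r, 0)
    set B : ℂ := 1 + b with hB
    have hev : ∀ᶠ r in m,
        Complex.normSq B * (1 + r) ≤
          2 * (dd r * (starRingEnd ℂ) B).re
            - (1 - r) * Complex.normSq (dd r)
            - 2 * r^2 * ((starRingEnd ℂ) B
                * (starRingEnd ℂ) ((starRingEnd ℂ) b * dd r)).re
            + r^2 * (1 - r) * Complex.normSq ((starRingEnd ℂ) b * dd r) := by
      filter_upwards [hball, self_mem_nhdsWithin] with r hrb hr
      have hs : (0:ℝ) < 1 - r := by linarith [hr.2]
      have hsp := schwarz_pick hψdiff hmaps hrb (by simp : (0:ℂ) ∈ ball (0:ℂ) 1)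
      rw [map_zero, zero_mul, sub_zero, norm_one, mul_one, sub_zero] at hsp
      rw [Complex.norm_real, Real.norm_eq_abs, abs_of_pos hr.1] at hsp
      have hne : (((1 - r : ℝ)) : ℂ) ≠ 0 := by
        exact_mod_cast hs.ne'
      have hne2 : (1:ℂ) - (r:ℂ) ≠ 0 := by
        intro hh
        have h1 : (r:ℂ) = 1 := by linear_combination -hh
        have : r = 1 := by exact_mod_cast h1
        linarith [hr.2]
      have hψr : (ψ (r:ℂ)) = (((1 - r:ℝ)):ℂ) * dd r - 1 := by
        rw [hdd]
        simp only
        push_cast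
        rw [mul_div_cancel₀ _ hne2]
        ring
      rw [← hb, hψr] at hsp
      have e0 : (((1 - r:ℝ)):ℂ) * dd r - 1 - b = (((1 - r:ℝ)):ℂ) * dd r - B := by
        rw [hB]; ring
      have e0' : 1 - (starRingEnd ℂ) b * ((((1 - r:ℝ)):ℂ) * dd r - 1)
          = (starRingEnd ℂ) B - (((1 - r:ℝ)):ℂ) * ((starRingEnd ℂ) b * dd r) := by
        rw [hB, map_add, map_one]; ring
      rw [e0, e0'] at hsp
      have hsq := mul_self_le_mul_self (norm_nonneg _) hsp
      set X : ℂ := (((1 - r:ℝ)):ℂ) * dd r - B with hX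
      set Y : ℂ := (starRingEnd ℂ) B - (((1 - r:ℝ)):ℂ) * ((starRingEnd ℂ) b * dd r) with hY
      have hsq2 : Complex.normSq X ≤ r^2 * Complex.normSq Y := by
        rw [← Complex.sq_norm, ← Complex.sq_norm]
        nlinarith [hsq, norm_nonneg X, norm_nonneg Y]
      have e1 : Complex.normSq X = (1-r)^2 * Complex.normSq (dd r)
          - 2 * ((1-r) * (dd r * (starRingEnd ℂ) B).re) + Complex.normSq B := by
        rw [hX, Complex.normSq_sub, Complex.normSq_mul, Complex.normSq_ofReal]
        rw [show ((((1 - r:ℝ)):ℂ) * dd r) * (starRingEnd ℂ) B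
            = (((1 - r:ℝ)):ℂ) * (dd r * (starRingEnd ℂ) B) by ring, Complex.re_ofReal_mul]
        ring
      have e2 : Complex.normSq Y = Complex.normSq B
          + (1-r)^2 * Complex.normSq ((starRingEnd ℂ) b * dd r)
          - 2 * ((1-r) * ((starRingEnd ℂ) B
              * (starRingEnd ℂ) ((starRingEnd ℂ) b * dd r)).re) := by
        rw [hY, Complex.normSq_sub, Complex.normSq_conj, Complex.normSq_mul,
          Complex.normSq_ofReal]
        rw [show ((starRingEnd ℂ) B * (starRingEnd ℂ) ((((1 - r:ℝ)):ℂ)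
              * ((starRingEnd ℂ) b * dd r)))
            = (((1 - r:ℝ)):ℂ) * ((starRingEnd ℂ) B
              * (starRingEnd ℂ) ((starRingEnd ℂ) b * dd r)) by
          rw [map_mul, Complex.conj_ofReal]; ring, Complex.re_ofReal_mul]
        ring
      rw [e1, e2] at hsq2
      have hkey : (1-r) * (Complex.normSq B * (1 + r))
          = Complex.normSq B - r^2 * Complex.normSq B := by ring
      have hkey2 : (1-r) * (2 * (dd r * (starRingEnd ℂ) B).re
            - (1 - r) * Complex.normSq (dd r)
            - 2 * r^2 * ((starRingEnd ℂ) B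
                * (starRingEnd ℂ) ((starRingEnd ℂ) b * dd r)).re
            + r^2 * (1 - r) * Complex.normSq ((starRingEnd ℂ) b * dd r))
          = 2 * ((1-r) * (dd r * (starRingEnd ℂ) B).re) - (1-r)^2 * Complex.normSq (dd r)
            - r^2 * (2 * ((1-r) * ((starRingEnd ℂ) B
                * (starRingEnd ℂ) ((starRingEnd ℂ) b * dd r)).re))
            + r^2 * ((1-r)^2 * Complex.normSq ((starRingEnd ℂ) b * dd r)) := by ring
      have hfin : (1-r) * (Complex.normSq B * (1 + r)) ≤ (1-r) * (2 * (dd r * (starRingEnd ℂ) B).re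
            - (1 - r) * Complex.normSq (dd r)
            - 2 * r^2 * ((starRingEnd ℂ) B
                * (starRingEnd ℂ) ((starRingEnd ℂ) b * dd r)).re
            + r^2 * (1 - r) * Complex.normSq ((starRingEnd ℂ) b * dd r)) := by
        rw [hkey, hkey2]
        nlinarith [hsq2]
      exact le_of_mul_le_mul_left hfin hs
    -- limits
    have hrlim : Tendsto (fun r : ℝ => r) m (nhds 1) :=
      tendsto_id.mono_left nhdsWithin_le_nhds
    have hslim : Tendsto (fun r : ℝ => 1 - r) m (nhds (1 - 1)) :=
      tendsto_const_nhds.sub hrlim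
    rw [sub_self] at hslim
    have hLlim : Tendsto (fun r : ℝ => Complex.normSq B * (1 + r)) m
        (nhds (Complex.normSq B * 2)) := by
      have h0 : Tendsto (fun r : ℝ => Complex.normSq B * (1 + r)) m
          (nhds (Complex.normSq B * (1 + 1))) :=
        tendsto_const_nhds.mul (tendsto_const_nhds.add hrlim)
      norm_num at h0
      exact h0
    have hWlim : Tendsto (fun r : ℝ => 2 * (dd r * (starRingEnd ℂ) B).re
            - (1 - r) * Complex.normSq (dd r)
            - 2 * r^2 * ((starRingEnd ℂ) B
                * (starRingEnd ℂ) ((starRingEnd ℂ) b * dd r)).re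
            + r^2 * (1 - r) * Complex.normSq ((starRingEnd ℂ) b * dd r)) m (nhds 0) := by
      have a0 : Tendsto (fun r : ℝ => dd r * (starRingEnd ℂ) B) m
          (nhds (0 * (starRingEnd ℂ) B)) := hddlim.mul tendsto_const_nhds
      rw [zero_mul] at a0
      have a1 : Tendsto (fun r : ℝ => (dd r * (starRingEnd ℂ) B).re) m
          (nhds ((0:ℂ).re)) := (Complex.continuous_re.tendsto _).comp a0
      rw [Complex.zero_re] at a1
      have t1 : Tendsto (fun r : ℝ => 2 * (dd r * (starRingEnd ℂ) B).re) m
          (nhds (2 * 0)) := (tendsto_const_nhds (x := (2:ℝ))).mul a1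
      rw [mul_zero] at t1
      have a2 : Tendsto (fun r : ℝ => Complex.normSq (dd r)) m
          (nhds (Complex.normSq 0)) := (Complex.continuous_normSq.tendsto _).comp hddlim
      rw [map_zero] at a2
      have t2 : Tendsto (fun r : ℝ => (1 - r) * Complex.normSq (dd r)) m
          (nhds (0 * 0)) := hslim.mul a2
      rw [mul_zero] at t2
      have a3 : Tendsto (fun r : ℝ => (starRingEnd ℂ) b * dd r) m
          (nhds ((starRingEnd ℂ) b * 0)) := tendsto_const_nhds.mul hddlim
      rw [mul_zero] at a3
      have a4 : Tendsto (fun r : ℝ => (starRingEnd ℂ) B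
          * (starRingEnd ℂ) ((starRingEnd ℂ) b * dd r)) m
          (nhds ((starRingEnd ℂ) B * (starRingEnd ℂ) 0)) :=
        tendsto_const_nhds.mul ((Complex.continuous_conj.tendsto _).comp a3)
      rw [map_zero, mul_zero] at a4
      have a5 : Tendsto (fun r : ℝ => ((starRingEnd ℂ) B
          * (starRingEnd ℂ) ((starRingEnd ℂ) b * dd r)).re) m (nhds ((0:ℂ).re)) :=
        (Complex.continuous_re.tendsto _).comp a4
      rw [Complex.zero_re] at a5
      have t3 : Tendsto (fun r : ℝ => 2 * r^2 * ((starRingEnd ℂ) B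
            * (starRingEnd ℂ) ((starRingEnd ℂ) b * dd r)).re) m
          (nhds (2 * 1^2 * 0)) :=
        ((tendsto_const_nhds (x := (2:ℝ))).mul (hrlim.pow 2)).mul a5
      rw [mul_zero] at t3
      have a6 : Tendsto (fun r : ℝ => Complex.normSq ((starRingEnd ℂ) b * dd r)) m
          (nhds (Complex.normSq 0)) := (Complex.continuous_normSq.tendsto _).comp a3
      rw [map_zero] at a6
      have t4 : Tendsto (fun r : ℝ => r^2 * (1 - r)
          * Complex.normSq ((starRingEnd ℂ) b * dd r)) m (nhds (1^2 * 0 * 0)) :=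
        ((hrlim.pow 2).mul hslim).mul a6
      rw [mul_zero] at t4
      have := ((t1.sub t2).sub t3).add t4
      simpa using this
    have hle := le_of_tendsto_of_tendsto hLlim hWlim hev
    have hpos : 0 < Complex.normSq B := Complex.normSq_pos.2 hBne
    linarith


/-- a holomorphic infinitesimal generator `g` on the unit disk with
angular limit `∠lim_{z→1} g z / |z - 1|³ = 0` vanishes identically on the disk. -/
theorem generator_rigidity_disk (g : ℂ → ℂ)
    (hg : DifferentiableOn ℂ g (ball (0 : ℂ) 1))
    (hgen : IsGenOnDisk g)
    (hlim : AngularLimit (fun z : ℂ => g z / ((‖z - 1‖ ^ 3 : ℝ) : ℂ)) 1 0) :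
    ∀ z ∈ ball (0 : ℂ) 1, g z = 0 := by
  haveI := m_neBot
  set m := nhdsWithin (1:ℝ) (Set.Ioo 0 1) with hm
  have hrad := radial_of_angular hlim
  have hne1 : ∀ z ∈ ball (0:ℂ) 1, (1:ℂ) - z ≠ 0 := by
    intro z hz h
    have : z = 1 := by linear_combination -h
    rw [this] at hz
    have := memb hz
    simp at this
  set q : ℂ → ℂ := fun ζ => -g ζ / (1 - ζ)^2 with hq
  have hqdiff : DifferentiableOn ℂ q (ball (0:ℂ) 1) := by
    apply DifferentiableOn.div hg.neg
    · exact ((differentiableOn_const 1).sub differentiableOn_id).pow 2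
    · intro z hz
      exact pow_ne_zero 2 (hne1 z hz)
  have hqre : ∀ z ∈ ball (0:ℂ) 1, 0 ≤ (q z).re := by
    intro z hz
    have hρ := rho_nonneg g (fun z w hz hw => gen_ineq hgen hz hw) hrad hz
    set u : ℂ := (1 - z)^2 with hu
    have hre_eq : ((z - 1) * (starRingEnd ℂ) (g z) * (1 - z)).re
        = (-g z * (starRingEnd ℂ) u).re := by
      rw [show (-g z * (starRingEnd ℂ) u) = (starRingEnd ℂ) ((z - 1) * (starRingEnd ℂ) (g z) * (1 - z)) from by
        rw [map_mul, map_mul, Complex.conj_conj, hu, map_pow, map_sub, map_sub, map_one]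
        ring]
      rw [Complex.conj_re]
    have hqz : q z = (-g z * (starRingEnd ℂ) u) * (((Complex.normSq u)⁻¹ : ℝ) : ℂ) := by
      rw [hq]
      simp only
      rw [div_eq_mul_inv, ← hu, Complex.inv_def, Complex.ofReal_inv]
      ring
    rw [hqz]
    rw [show ((-g z * (starRingEnd ℂ) u) * (((Complex.normSq u)⁻¹ : ℝ) : ℂ))
        = ((((Complex.normSq u)⁻¹ : ℝ) : ℂ) * (-g z * (starRingEnd ℂ) u)) from by ring]
    rw [Complex.re_ofReal_mul]
    apply mul_nonneg (inv_nonneg.2 (Complex.normSq_nonneg u))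
    rw [← hre_eq]
    exact hρ
  have hqrad : Tendsto (fun r : ℝ => q r / (((1 - r : ℝ)) : ℂ)) m (nhds 0) := by
    have heq : (fun r : ℝ => q r / (((1 - r : ℝ)) : ℂ))
        =ᶠ[m] fun r : ℝ => -(g r / (((1 - r)^3 : ℝ) : ℂ)) := by
      filter_upwards [self_mem_nhdsWithin] with r hr
      have hne : (1:ℂ) - (r:ℂ) ≠ 0 := by
        intro h
        have h1 : (r:ℂ) = 1 := by linear_combination -h
        have : r = 1 := by exact_mod_cast h1
        linarith [hr.2]
      rw [hq]
      simp only
      push_cast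
      rw [div_div, ← pow_succ, neg_div]
    apply Tendsto.congr' heq.symm
    have := hrad.neg
    rw [neg_zero] at this
    exact this
  have hq0 := q_zero q hqdiff hqre hqrad
  intro z hz
  have := hq0 z hz
  rw [hq] at this
  simp only at this
  rw [div_eq_zero_iff] at this
  rcases this with h | h
  · linear_combination -h
  · exact absurd h (pow_ne_zero 2 (hne1 z hz))
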